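/- Let G be a torsion-free group and let α ∈ ℂG be a nonzero golden element (i.e. α is self-adjoint with Υ(α) = a_1 − ∑_{g≠1} |a_g| ≥ 0). Then α is not an analytical zero divisor: there is no nonzero β ∈ ℓ²(G) with αβ = 0. -/

import Mathlib

open scoped ENNReal

/-- The adjoint `α* = ∑ conj(a_g)·g⁻¹` of an element of the complex group algebra. -/
noncomputable def MonoidAlgebra.adj {G : Type*} [Group G] (α : MonoidAlgebra ℂ G) :
    MonoidAlgebra ℂ G :=
  MonoidAlgebra.ofCoeff
    (Finsupp.mapRange (starRingEnd ℂ) (map_zero _) (Finsupp.equivMapDomain (Equiv.inv G) α.coeff))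

/-- The product of `α ∈ ℂG` with `β ∈ ℓ²(G)`, defined pointwise by the finite sum
`(αβ)(x) = ∑_{g ∈ supp α} α(g)·β(g⁻¹x)`. -/
noncomputable def smulL2 {G : Type*} [Group G] (α : MonoidAlgebra ℂ G)
    (β : lp (fun _ : G => ℂ) 2) : G → ℂ :=
  fun x => ∑ g ∈ α.coeff.support, α.coeff g * β (g⁻¹ * x)

/-- `Υ(α) = a_1 − ∑_{g ≠ 1} |a_g|` (for self-adjoint `α`, `a_1` is real, so we take
the real part). -/
noncomputable def Upsilon {G : Type*} [Group G] [DecidableEq G] (α : MonoidAlgebra ℂ G) : ℝ :=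
  (α.coeff 1).re - ∑ g ∈ α.coeff.support.erase 1, ‖α.coeff g‖

/-- A self-adjoint element of `ℂG` is golden if `Υ(α) ≥ 0`. -/
def IsGolden {G : Type*} [Group G] [DecidableEq G] (α : MonoidAlgebra ℂ G) : Prop :=
  MonoidAlgebra.adj α = α ∧ 0 ≤ Upsilon α

lemma translate_memℓp {G : Type*} [Group G] (g : G) (f : lp (fun _ : G => ℝ) ∞) :
    Memℓp (fun x => f (g⁻¹ * x)) ∞ := by
  have hf : Memℓp (fun x => f x) ∞ := f.2
  rw [memℓp_infty_iff] at hf ⊢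
  obtain ⟨C, hC⟩ := hf
  exact ⟨C, by rintro y ⟨x, rfl⟩; exact hC ⟨g⁻¹ * x, rfl⟩⟩

/-- A group is amenable if there is a left-invariant mean on `ℓ∞(G, ℝ)`: a linear
functional `m` with `m 1 = 1`, `m f ≥ 0` whenever `f ≥ 0`, which is invariant under
left translation. -/
def IsAmenable (G : Type*) [Group G] : Prop :=
  ∃ m : lp (fun _ : G => ℝ) ∞ →ₗ[ℝ] ℝ,
    m 1 = 1 ∧
    (∀ f : lp (fun _ : G => ℝ) ∞, (∀ x, 0 ≤ f x) → 0 ≤ m f) ∧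
    ∀ (g : G) (f : lp (fun _ : G => ℝ) ∞),
      m ⟨fun x => f (g⁻¹ * x), translate_memℓp g f⟩ = m f

/-- A monoid is torsion-free if no element other than `1` has finite order
(the former Mathlib `Monoid.IsTorsionFree`). -/
def Monoid.IsTorsionFree (G : Type*) [Monoid G] : Prop :=
  ∀ g : G, g ≠ 1 → ¬IsOfFinOrder g

section Aux
variable {G : Type*} [Group G]

lemma translate_memℓp2 (g : G) (β : lp (fun _ : G => ℂ) 2) :
    Memℓp (fun x => β (g⁻¹ * x)) 2 := by
  have h := lp.memℓp β
  rw [memℓp_gen_iff (by norm_num)] at h ⊢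
  exact ((Equiv.mulLeft g⁻¹).summable_iff (f := fun y => ‖β y‖ ^ (2:ℝ≥0∞).toReal)).2 h

noncomputable def Tr (g : G) (β : lp (fun _ : G => ℂ) 2) : lp (fun _ : G => ℂ) 2 :=
  ⟨fun x => β (g⁻¹ * x), translate_memℓp2 g β⟩

@[simp] lemma trans_apply (g : G) (β : lp (fun _ : G => ℂ) 2) (x : G) :
    Tr g β x = β (g⁻¹ * x) := rfl

lemma norm_trans (g : G) (β : lp (fun _ : G => ℂ) 2) : ‖Tr g β‖ = ‖β‖ := by
  rw [lp.norm_eq_tsum_rpow (by norm_num) (Tr g β), lp.norm_eq_tsum_rpow (by norm_num) β]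
  congr 1
  exact ((Equiv.mulLeft g⁻¹).tsum_eq (f := fun y => ‖β y‖ ^ (2:ℝ≥0∞).toReal))

lemma Tr_one (β : lp (fun _ : G => ℂ) 2) : Tr 1 β = β := by
  apply lp.ext; funext x; simp [Tr]

lemma sum_Tr_eq_zero [DecidableEq G] (α : MonoidAlgebra ℂ G) (β : lp (fun _ : G => ℂ) 2)
    (h : smulL2 α β = 0) : (∑ g ∈ α.coeff.support, α.coeff g • Tr g β) = 0 := by
  apply lp.ext
  rw [lp.coeFn_sum]
  funext x
  have := congrFun h x
  simpa [smulL2, lp.coeFn_smul] using this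

end Aux

/-- In the group algebra of a torsion-free group, a nonzero golden element is not an
analytical zero divisor. -/
theorem stmt_13 {G : Type*} [Group G] [DecidableEq G] (hG : Monoid.IsTorsionFree G)
    (α : MonoidAlgebra ℂ G) (hα : α ≠ 0) (hgold : IsGolden α) :
    ¬ ∃ β : lp (fun _ : G => ℂ) 2, β ≠ 0 ∧ smulL2 α β = 0 := by
  rintro ⟨β, hβ, hzero⟩
  -- basic quantities
  set N : ℝ := ‖β‖ ^ 2 with hNdef
  have hβnorm : 0 < ‖β‖ := norm_pos_iff.mpr hβ
  have hN : 0 < N := by positivity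
  -- inner product identity
  have hsum : (∑ g ∈ α.coeff.support, α.coeff g • Tr g β) = 0 := sum_Tr_eq_zero α β hzero
  have hinner : ∑ g ∈ α.coeff.support, α.coeff g * (inner ℂ β (Tr g β) : ℂ) = 0 := by
    have := congrArg (fun v => (inner ℂ β v : ℂ)) hsum
    simpa [inner_sum, inner_smul_right] using this
  have hself : (inner ℂ β β : ℂ) = (N : ℂ) := by
    rw [hNdef]
    push_cast
    exact inner_self_eq_norm_sq_to_K β
  -- rewrite with the identity element split off
  have hsplit : α.coeff 1 * (N : ℂ) + ∑ g ∈ α.coeff.support.erase 1, α.coeff g * (inner ℂ β (Tr g β) : ℂ) = 0 := by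
    by_cases h1 : (1 : G) ∈ α.coeff.support
    · rw [← hinner, ← Finset.add_sum_erase _ _ h1, Tr_one, hself]
    · rw [Finsupp.notMem_support_iff.mp h1, Finset.erase_eq_of_notMem h1]
      simpa using hinner
  -- bound each inner product by N
  have habs : ∀ g : G, ‖(inner ℂ β (Tr g β) : ℂ)‖ ≤ N := by
    intro g
    have h := norm_inner_le_norm (𝕜 := ℂ) β (Tr g β)
    rw [norm_trans] at h
    simpa [hNdef, sq] using h
  have hre : (α.coeff 1).re * N ≤ ∑ g ∈ α.coeff.support.erase 1, ‖α.coeff g‖ * ‖(inner ℂ β (Tr g β) : ℂ)‖ := by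
    have h := congrArg Complex.re hsplit
    simp only [Complex.add_re, Complex.mul_re, Complex.ofReal_re, Complex.ofReal_im,
      mul_zero, sub_zero, Complex.zero_re] at h
    have h2 : (α.coeff 1).re * N = -(∑ g ∈ α.coeff.support.erase 1, α.coeff g * (inner ℂ β (Tr g β) : ℂ)).re := by
      linarith
    rw [h2]
    calc -(∑ g ∈ α.coeff.support.erase 1, α.coeff g * (inner ℂ β (Tr g β) : ℂ)).re
        ≤ ‖∑ g ∈ α.coeff.support.erase 1, α.coeff g * (inner ℂ β (Tr g β) : ℂ)‖ := by
          have := Complex.abs_re_le_norm (∑ g ∈ α.coeff.support.erase 1, α.coeff g * (inner ℂ β (Tr g β) : ℂ))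
          cases abs_cases (∑ g ∈ α.coeff.support.erase 1, α.coeff g * (inner ℂ β (Tr g β) : ℂ)).re <;> linarith
      _ ≤ ∑ g ∈ α.coeff.support.erase 1, ‖α.coeff g * (inner ℂ β (Tr g β) : ℂ)‖ :=
          norm_sum_le _ _
      _ = ∑ g ∈ α.coeff.support.erase 1, ‖α.coeff g‖ * ‖(inner ℂ β (Tr g β) : ℂ)‖ := by
          simp [map_mul]
  have hub : ∑ g ∈ α.coeff.support.erase 1, ‖α.coeff g‖ * ‖(inner ℂ β (Tr g β) : ℂ)‖
      ≤ (α.coeff 1).re * N := by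
    calc ∑ g ∈ α.coeff.support.erase 1, ‖α.coeff g‖ * ‖(inner ℂ β (Tr g β) : ℂ)‖
        ≤ ∑ g ∈ α.coeff.support.erase 1, ‖α.coeff g‖ * N := by
          refine Finset.sum_le_sum fun g _ => ?_
          exact mul_le_mul_of_nonneg_left (habs g) (norm_nonneg _)
      _ = (∑ g ∈ α.coeff.support.erase 1, ‖α.coeff g‖) * N := by rw [Finset.sum_mul]
      _ ≤ (α.coeff 1).re * N := by
          have hU := hgold.2
          unfold Upsilon at hU
          nlinarith [hN.le]
  -- each term attains its maximum
  have hterm : ∀ g ∈ α.coeff.support.erase 1,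
      ‖α.coeff g‖ * (N - ‖(inner ℂ β (Tr g β) : ℂ)‖) = 0 := by
    have hzero' : ∑ g ∈ α.coeff.support.erase 1,
        ‖α.coeff g‖ * (N - ‖(inner ℂ β (Tr g β) : ℂ)‖) = 0 := by
      have : ∑ g ∈ α.coeff.support.erase 1, ‖α.coeff g‖ * (N - ‖(inner ℂ β (Tr g β) : ℂ)‖)
          = ∑ g ∈ α.coeff.support.erase 1, ‖α.coeff g‖ * N
            - ∑ g ∈ α.coeff.support.erase 1, ‖α.coeff g‖ * ‖(inner ℂ β (Tr g β) : ℂ)‖ := by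
        rw [← Finset.sum_sub_distrib]; congr 1; ext g; ring
      have hba : ∑ g ∈ α.coeff.support.erase 1, ‖α.coeff g‖ * N
          ≤ ∑ g ∈ α.coeff.support.erase 1, ‖α.coeff g‖ * ‖(inner ℂ β (Tr g β) : ℂ)‖ := by
        calc ∑ g ∈ α.coeff.support.erase 1, ‖α.coeff g‖ * N
            = (∑ g ∈ α.coeff.support.erase 1, ‖α.coeff g‖) * N := by rw [Finset.sum_mul]
          _ ≤ (α.coeff 1).re * N := by
              have hU := hgold.2; unfold Upsilon at hU; nlinarith [hN.le]
          _ ≤ _ := hre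
      have hab : ∑ g ∈ α.coeff.support.erase 1, ‖α.coeff g‖ * ‖(inner ℂ β (Tr g β) : ℂ)‖
          ≤ ∑ g ∈ α.coeff.support.erase 1, ‖α.coeff g‖ * N := by
        refine Finset.sum_le_sum fun g _ => ?_
        exact mul_le_mul_of_nonneg_left (habs g) (norm_nonneg _)
      linarith
    intro g hg
    refine (Finset.sum_eq_zero_iff_of_nonneg fun g _ => ?_).mp hzero' g hg
    exact mul_nonneg (norm_nonneg _) (by linarith [habs g])
  -- case analysis on the support
  rcases Finset.eq_empty_or_nonempty (α.coeff.support.erase 1) with hemp | ⟨g₀, hg₀⟩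
  · -- support ⊆ {1}, so α = a₁ • δ₁ with a₁ ≠ 0
    rw [hemp] at hsplit
    simp only [Finset.sum_empty, add_zero, mul_eq_zero] at hsplit
    rcases hsplit with h | h
    · -- α.coeff 1 = 0 then α = 0
      apply hα
      ext g
      by_cases hg : g = 1
      · simpa [hg] using h
      · by_contra hne
        have : g ∈ α.coeff.support.erase 1 := Finset.mem_erase.mpr ⟨hg, Finsupp.mem_support_iff.mpr hne⟩
        simp [hemp] at this
    · exact absurd (by exact_mod_cast h) hN.ne'
  · -- there is g₀ ≠ 1 in the support: translation eigenvector
    have hg₀1 : g₀ ≠ 1 := (Finset.mem_erase.mp hg₀).1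
    have hg₀s : g₀ ∈ α.coeff.support := (Finset.mem_erase.mp hg₀).2
    have hα₀ : ‖α.coeff g₀‖ ≠ 0 := by
      simpa using Finsupp.mem_support_iff.mp hg₀s
    have hinner₀ : ‖(inner ℂ β (Tr g₀ β) : ℂ)‖ = N := by
      have := hterm g₀ hg₀
      rcases mul_eq_zero.mp this with h | h
      · exact absurd h hα₀
      · linarith [sub_eq_zero.mp h]
    have hTrne : Tr g₀ β ≠ 0 := by
      rw [← norm_pos_iff, norm_trans]; exact hβnorm
    have heq : ‖(inner ℂ β (Tr g₀ β) : ℂ)‖ = ‖β‖ * ‖Tr g₀ β‖ := by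
      rw [norm_trans, hinner₀, hNdef, sq]
    obtain ⟨r, hr0, hrβ⟩ := (norm_inner_eq_norm_iff hβ hTrne).mp heq
    have hrnorm : ‖r‖ = 1 := by
      have h1 : ‖r‖ * ‖β‖ = ‖β‖ := by rw [← norm_smul, ← hrβ, norm_trans]
      have h2 : ‖r‖ * ‖β‖ = 1 * ‖β‖ := by rw [one_mul, h1]
      exact mul_right_cancel₀ hβnorm.ne' h2
    have hpt : ∀ x, β (g₀⁻¹ * x) = r * β x := by
      intro x
      have := congrFun (congrArg (fun (v : lp (fun _ : G => ℂ) 2) => (v : G → ℂ)) hrβ) x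
      simpa [Tr, lp.coeFn_smul] using this
    have hptn : ∀ (n : ℕ) (x : G), β (g₀⁻¹ ^ n * x) = r ^ n * β x := by
      intro n
      induction n with
      | zero => simp
      | succ n ih =>
        intro x
        rw [pow_succ', mul_assoc, hpt, ih, pow_succ', mul_assoc]
    -- pick a point where β is nonzero
    obtain ⟨x₀, hx₀⟩ : ∃ x, β x ≠ 0 := by
      by_contra h
      push_neg at h
      exact hβ (lp.ext (funext fun x => h x))
    -- the orbit is infinite, but ‖β‖ is constant on it: contradiction with summability
    have hinj : Function.Injective fun n : ℕ => g₀⁻¹ ^ n * x₀ := by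
      have h1 : ¬IsOfFinOrder g₀⁻¹ := hG g₀⁻¹ (inv_ne_one.mpr hg₀1)
      have h2 : Function.Injective fun n : ℕ => g₀⁻¹ ^ n :=
        injective_pow_iff_not_isOfFinOrder.mpr h1
      exact fun m n h => h2 (mul_right_cancel h)
    have hconst : ∀ n : ℕ, ‖β (g₀⁻¹ ^ n * x₀)‖ = ‖β x₀‖ := by
      intro n
      rw [hptn n x₀, norm_mul, norm_pow, hrnorm, one_pow, one_mul]
    have hsummable : Summable fun x : G => ‖β x‖ ^ (2 : ℝ≥0∞).toReal :=
      (lp.memℓp β).summable (by norm_num)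
    have hε : (0 : ℝ) < ‖β x₀‖ ^ (2 : ℝ≥0∞).toReal := by
      have : (0:ℝ) < ‖β x₀‖ := norm_pos_iff.mpr hx₀
      positivity
    have hev : ∀ᶠ x in Filter.cofinite, ‖β x‖ ^ (2 : ℝ≥0∞).toReal < ‖β x₀‖ ^ (2 : ℝ≥0∞).toReal :=
      hsummable.tendsto_cofinite_zero.eventually (gt_mem_nhds hε)
    rw [Filter.eventually_cofinite] at hev
    have hsub : Set.range (fun n : ℕ => g₀⁻¹ ^ n * x₀) ⊆
        {x | ¬‖β x‖ ^ (2 : ℝ≥0∞).toReal < ‖β x₀‖ ^ (2 : ℝ≥0∞).toReal} := by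
      rintro x ⟨n, rfl⟩
      simp only [Set.mem_setOf_eq, hconst n, lt_self_iff_false, not_false_eq_true]
    exact (Set.infinite_range_of_injective hinj) (hev.subset hsub)
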